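/- The limit as q → 1⁻ of ζ_q(−1) = (1−q)^{-1}( 1/(q²−1) − 1/(q−1) + 1/(2 log q) ) equals −1/12. -/

import Mathlib

open Filter Real Set

lemma aux_e_tendsto :
    Tendsto (fun q : ℝ => (Real.log q + ((1-q) + (1-q)^2/2 + (1-q)^3/3))/(1-q)^3)
      (nhdsWithin 1 (Set.Ioo 0 1)) (nhds 0) := by
  have hbound : Tendsto (fun q : ℝ => (1-q)/q) (nhdsWithin 1 (Set.Ioo 0 1)) (nhds 0) := by
    have h : Tendsto (fun q : ℝ => (1-q)/q) (nhds 1) (nhds ((1-1)/1)) := by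
      apply Filter.Tendsto.div
      · exact (tendsto_const_nhds.sub tendsto_id)
      · exact tendsto_id
      · norm_num
    simpa using h.mono_left nhdsWithin_le_nhds
  apply squeeze_zero_norm' _ hbound
  filter_upwards [self_mem_nhdsWithin] with q hq
  obtain ⟨hq0, hq1⟩ := hq
  set x := 1 - q with hx
  have hx0 : 0 < x := by simp [hx]; linarith
  have hx1 : x < 1 := by simp [hx]; linarith
  have h := Real.abs_log_sub_add_sum_range_le (x := x) (by rw [abs_of_pos hx0]; exact hx1) 3
  have hsum : (∑ i ∈ Finset.range 3, x ^ (i + 1) / (i + 1)) = x + x^2/2 + x^3/3 := by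
    simp [Finset.sum_range_succ]; ring
  rw [hsum, abs_of_pos hx0] at h
  have h1x : 1 - x = q := by rw [hx]; ring
  rw [h1x] at h
  have h3 : (0:ℝ) < x^3 := by positivity
  calc ‖(Real.log q + (x + x^2/2 + x^3/3))/x^3‖
      = |x + x^2/2 + x^3/3 + Real.log q| / x^3 := by
        rw [Real.norm_eq_abs, abs_div, abs_of_pos h3]; ring_nf
    _ ≤ (x^4/q) / x^3 := by
        gcongr
    _ = x/q := by field_simp

lemma aux_slope : Tendsto (fun q : ℝ => Real.log q/(1-q))
    (nhdsWithin 1 (Set.Ioo 0 1)) (nhds (-1)) := by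
  have hd : HasDerivAt Real.log 1 1 := by simpa using Real.hasDerivAt_log one_ne_zero
  have hs := hasDerivAt_iff_tendsto_slope.mp hd
  have hsub : nhdsWithin (1:ℝ) (Set.Ioo 0 1) ≤ nhdsWithin 1 {(1:ℝ)}ᶜ := by
    apply nhdsWithin_mono
    intro x hx
    exact ne_of_lt hx.2
  have h2 : Tendsto (slope Real.log 1) (nhdsWithin 1 (Set.Ioo 0 1)) (nhds 1) :=
    hs.mono_left hsub
  have h3 := h2.neg
  apply h3.congr'
  filter_upwards [self_mem_nhdsWithin] with q hq
  have hne : q - 1 ≠ 0 := by have := hq.2; intro h; linarith [sub_eq_zero.mp h]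
  have h1q : (1:ℝ) - q ≠ 0 := fun h => hne (by linarith [sub_eq_zero.mp h])
  simp [slope, Real.log_one]
  field_simp
  ring

theorem stmt_6 :
    Filter.Tendsto
      (fun q : ℝ => (1 - q)⁻¹ * (1 / (q ^ 2 - 1) - 1 / (q - 1) + 1 / (2 * Real.log q)))
      (nhdsWithin 1 (Set.Ioo 0 1)) (nhds (-(1 / 12))) := by
  have hid : Tendsto (fun q : ℝ => q) (nhdsWithin 1 (Set.Ioo 0 1)) (nhds 1) :=
    tendsto_id.mono_left nhdsWithin_le_nhds
  have he := aux_e_tendsto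
  have hL := aux_slope
  have hnum : Tendsto
      (fun q : ℝ => 1/3 + 2*(1-q)/3 +
        2*q*((Real.log q + ((1-q) + (1-q)^2/2 + (1-q)^3/3))/(1-q)^3))
      (nhdsWithin 1 (Set.Ioo 0 1)) (nhds (1/3)) := by
    have : Tendsto
        (fun q : ℝ => 1/3 + 2*(1-q)/3 +
          2*q*((Real.log q + ((1-q) + (1-q)^2/2 + (1-q)^3/3))/(1-q)^3))
        (nhdsWithin 1 (Set.Ioo 0 1)) (nhds (1/3 + 2*(1-1)/3 + 2*1*0)) := by
      apply Filter.Tendsto.add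
      · apply Filter.Tendsto.add tendsto_const_nhds
        exact (tendsto_const_nhds.mul (tendsto_const_nhds.sub hid)).div_const 3
      · exact (tendsto_const_nhds.mul hid).mul he
    simpa using this
  have hden : Tendsto (fun q : ℝ => 2*(1+q)*(Real.log q/(1-q)))
      (nhdsWithin 1 (Set.Ioo 0 1)) (nhds (-4)) := by
    have : Tendsto (fun q : ℝ => 2*(1+q)*(Real.log q/(1-q)))
        (nhdsWithin 1 (Set.Ioo 0 1)) (nhds (2*(1+1)*(-1))) :=
      (tendsto_const_nhds.mul (tendsto_const_nhds.add hid)).mul hL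
    have h4 : (2:ℝ)*(1+1)*(-1) = -4 := by norm_num
    rwa [h4] at this
  have hdiv := hnum.div hden (by norm_num : (-4:ℝ) ≠ 0)
  have : (1/3 : ℝ) / (-4) = -(1/12) := by norm_num
  rw [this] at hdiv
  apply hdiv.congr'
  filter_upwards [self_mem_nhdsWithin] with q hq
  obtain ⟨hq0, hq1⟩ := hq
  have h1q : (1:ℝ) - q ≠ 0 := by intro h; linarith [sub_eq_zero.mp h]
  have hqm1 : q - 1 ≠ 0 := by intro h; linarith [sub_eq_zero.mp h]
  have hqp1 : q + 1 ≠ 0 := by intro h; linarith [add_eq_zero_iff_eq_neg.mp h]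
  have hq2 : q^2 - 1 ≠ 0 := ne_of_lt (by nlinarith)
  have hlog : Real.log q ≠ 0 := ne_of_lt (Real.log_neg hq0 hq1)
  simp only [Pi.div_apply]
  field_simp
  ring
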